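/- Arbitrage-free interval (Lemma, Ferreira–Parkes setting): let x* > 0 and consider the state (x*, F_y(x*)). (i) If x* ∈ [L_x, R_x], then the total profit of a miner from executing any finite sequence of its own transactions starting at this state is at most 0. (ii) If x* < L_x, then the single transaction Sell(X, (L_x − x*)/(1−f)) has strictly positive miner profit and its profit is at least the total profit of any finite sequence of miner transactions started at this state; symmetrically, if x* > R_x, the single transaction Sell(Y, (F_y(R_x) − F_y(x*))/(1−f)) is optimal and has strictly positive profit. -/

import Mathlib

/-- A transaction in the two-token CFMM: sell `q` units of token X or of token Y. -/
inductive Tx where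
  | sellX (q : ℝ)
  | sellY (q : ℝ)

namespace Tx

/-- The amount of tokens sold by a transaction. -/
def amount : Tx → ℝ
  | sellX q => q
  | sellY q => q

end Tx

/-- Executing a transaction at the state `(x, Fy x)` with fee fraction `f`:
the new `X`-reserve (the new `Y`-reserve is `Fy` of it). -/
noncomputable def step (Fy Fx : ℝ → ℝ) (f : ℝ) (x : ℝ) : Tx → ℝ
  | Tx.sellX q => x + (1 - f) * q
  | Tx.sellY q => Fx (Fy x + (1 - f) * q)

/-- Profit that a miner gains by executing one transaction at state `(x, Fy x)`. -/
noncomputable def txProfit (Fy Fx : ℝ → ℝ) (f px py : ℝ) (x : ℝ) : Tx → ℝ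
  | Tx.sellX q => (Fy x - Fy (x + (1 - f) * q)) * py - q * px
  | Tx.sellY q => (x - Fx (Fy x + (1 - f) * q)) * px - q * py

/-- Total profit from executing a finite sequence of transactions starting at `X`-reserve `x`. -/
noncomputable def totalProfit (Fy Fx : ℝ → ℝ) (f px py : ℝ) : ℝ → List Tx → ℝ
  | _, [] => 0
  | x, t :: rest =>
      txProfit Fy Fx f px py x t + totalProfit Fy Fx f px py (step Fy Fx f x t) rest

/-- All intermediate `X`-reserves (including initial and final) along an execution. -/
noncomputable def statesList (Fy Fx : ℝ → ℝ) (f : ℝ) : ℝ → List Tx → List ℝ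
  | x, [] => [x]
  | x, t :: rest => x :: statesList Fy Fx f (step Fy Fx f x t) rest

/-- **arbitrage-free interval.**
Let `x* > 0` and consider the state `(x*, F_y(x*))`.
(i) If `x* ∈ [L_x, R_x]`, then the total profit of a miner from executing any finite
sequence of its own transactions starting at this state is at most `0`.
(ii) If `x* < L_x`, then the single transaction `Sell(X, (L_x − x*)/(1−f))` has strictly
positive miner profit, and its profit is at least the total profit of any finite sequence of
miner transactions started at this state; symmetrically, if `x* > R_x`, the single
transaction `Sell(Y, (F_y(R_x) − F_y(x*))/(1−f))` is optimal and has strictly positive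
profit. (Sequences have nonnegative sale amounts and keep reserves positive.) -/

noncomputable def afiPhi (Fy : ℝ → ℝ) (f c Lx Rx : ℝ) (x : ℝ) : ℝ :=
  if x < Lx then (Fy x - Fy Lx) - (Lx - x) * (c / (1 - f))
  else if x ≤ Rx then 0
  else (x - Rx) * c - (Fy Rx - Fy x) / (1 - f)

set_option maxHeartbeats 1600000 in
theorem arbitrage_free_interval
    (Fy Fx : ℝ → ℝ) (f px py Lx Rx xstar : ℝ)
    (hf0 : 0 ≤ f) (hf1 : f < 1)
    (hpx : 0 < px) (hpy : 0 < py)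
    (hFy_diff : ∀ x ∈ Set.Ioi (0 : ℝ), DifferentiableAt ℝ Fy x)
    (hFy_anti : StrictAntiOn Fy (Set.Ioi 0))
    (hr_pos : ∀ x ∈ Set.Ioi (0 : ℝ), 0 < -deriv Fy x)
    (hr_anti : StrictAntiOn (fun x => -deriv Fy x) (Set.Ioi 0))
    (hFx_inv : Set.InvOn Fx Fy (Set.Ioi 0) (Fy '' Set.Ioi 0))
    (hLx_pos : 0 < Lx) (hLx : -deriv Fy Lx = (1 / (1 - f)) * (px / py))
    (hRx_pos : 0 < Rx) (hRx : -deriv Fy Rx = (1 - f) * (px / py))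
    (hxstar_pos : 0 < xstar) :
    -- (i) no profitable strategy inside the arbitrage-free interval
    (xstar ∈ Set.Icc Lx Rx →
      ∀ txs : List Tx, (∀ t ∈ txs, 0 ≤ t.amount) →
        (∀ s ∈ statesList Fy Fx f xstar txs, 0 < s) →
        totalProfit Fy Fx f px py xstar txs ≤ 0) ∧
    -- (ii) left of the interval: one `Sell(X, (L_x − x*)/(1−f))` is optimal and profitable
    (xstar < Lx →
      0 < txProfit Fy Fx f px py xstar (Tx.sellX ((Lx - xstar) / (1 - f))) ∧
      ∀ txs : List Tx, (∀ t ∈ txs, 0 ≤ t.amount) →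
        (∀ s ∈ statesList Fy Fx f xstar txs, 0 < s) →
        totalProfit Fy Fx f px py xstar txs ≤
          txProfit Fy Fx f px py xstar (Tx.sellX ((Lx - xstar) / (1 - f)))) ∧
    -- (ii') right of the interval: one `Sell(Y, (F_y(R_x) − F_y(x*))/(1−f))` is optimal
    (Rx < xstar →
      0 < txProfit Fy Fx f px py xstar (Tx.sellY ((Fy Rx - Fy xstar) / (1 - f))) ∧
      ∀ txs : List Tx, (∀ t ∈ txs, 0 ≤ t.amount) →
        (∀ s ∈ statesList Fy Fx f xstar txs, 0 < s) →
        totalProfit Fy Fx f px py xstar txs ≤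
          txProfit Fy Fx f px py xstar (Tx.sellY ((Fy Rx - Fy xstar) / (1 - f)))) := by
  have h1f : (0:ℝ) < 1 - f := by linarith
  have hα : -deriv Fy Lx = px / py / (1 - f) := by rw [hLx]; ring
  -- monotonicity of Fy (nonstrict)
  have hmono : ∀ a b : ℝ, 0 < a → a ≤ b → Fy b ≤ Fy a := by
    intro a b ha hab
    rcases eq_or_lt_of_le hab with h | h
    · rw [h]
    · exact le_of_lt (hFy_anti (Set.mem_Ioi.2 ha) (Set.mem_Ioi.2 (ha.trans h)) h)
  have hr_anti' : ∀ a b : ℝ, 0 < a → a ≤ b → -deriv Fy b ≤ -deriv Fy a := by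
    intro a b ha hab
    rcases eq_or_lt_of_le hab with h | h
    · rw [h]
    · exact le_of_lt (hr_anti (Set.mem_Ioi.2 ha) (Set.mem_Ioi.2 (ha.trans h)) h)
  -- mean value theorem
  have hmvt : ∀ a b : ℝ, 0 < a → a < b →
      ∃ ξ, a < ξ ∧ ξ < b ∧ Fy a - Fy b = (b - a) * (-deriv Fy ξ) := by
    intro a b ha hab
    have hcont : ContinuousOn Fy (Set.Icc a b) := fun x hx =>
      ((hFy_diff x (lt_of_lt_of_le ha hx.1)).continuousAt).continuousWithinAt
    have hdiff : DifferentiableOn ℝ Fy (Set.Ioo a b) := fun x hx =>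
      (hFy_diff x (ha.trans hx.1)).differentiableWithinAt
    obtain ⟨ξ, hξ, hd⟩ := exists_deriv_eq_slope Fy hab hcont hdiff
    refine ⟨ξ, hξ.1, hξ.2, ?_⟩
    have hba : b - a ≠ 0 := by linarith [hξ.1.trans hξ.2]
    rw [hd]; field_simp; ring
  have hL1s : ∀ a b : ℝ, 0 < a → a < b → (b - a) * (-deriv Fy b) < Fy a - Fy b := by
    intro a b ha hab
    obtain ⟨ξ, h1, h2, h3⟩ := hmvt a b ha hab
    have hr : -deriv Fy b < -deriv Fy ξ :=
      hr_anti (Set.mem_Ioi.2 (ha.trans h1)) (Set.mem_Ioi.2 (ha.trans hab)) h2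
    rw [h3]
    have : 0 < b - a := by linarith
    nlinarith
  have hL2s : ∀ a b : ℝ, 0 < a → a < b → Fy a - Fy b < (b - a) * (-deriv Fy a) := by
    intro a b ha hab
    obtain ⟨ξ, h1, h2, h3⟩ := hmvt a b ha hab
    have hr : -deriv Fy ξ < -deriv Fy a :=
      hr_anti (Set.mem_Ioi.2 ha) (Set.mem_Ioi.2 (ha.trans h1)) h1
    rw [h3]
    have : 0 < b - a := by linarith
    nlinarith
  have hL1 : ∀ a b : ℝ, 0 < a → a ≤ b → (b - a) * (-deriv Fy b) ≤ Fy a - Fy b := by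
    intro a b ha hab
    rcases eq_or_lt_of_le hab with h | h
    · rw [h]; simp
    · exact le_of_lt (hL1s a b ha h)
  have hL2 : ∀ a b : ℝ, 0 < a → a ≤ b → Fy a - Fy b ≤ (b - a) * (-deriv Fy a) := by
    intro a b ha hab
    rcases eq_or_lt_of_le hab with h | h
    · rw [h]; simp
    · exact le_of_lt (hL2s a b ha h)
  have hLR : Lx ≤ Rx := by
    by_contra hcon
    push_neg at hcon
    have h1 : -deriv Fy Lx < -deriv Fy Rx :=
      hr_anti (Set.mem_Ioi.2 hRx_pos) (Set.mem_Ioi.2 hLx_pos) hcon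
    rw [hα, hRx] at h1
    have hc : 0 < px / py := div_pos hpx hpy
    have h2 : (1 - f) * (px / py) ≤ px / py := by nlinarith
    have h3 : px / py ≤ px / py / (1 - f) := by
      rw [le_div_iff₀ h1f]; nlinarith
    linarith
  -- Basic facts about D and E
  -- F1 : D a b ≤ 0 for Lx ≤ a ≤ b
  have F1 : ∀ a b : ℝ, Lx ≤ a → a ≤ b →
      (Fy a - Fy b) - (b - a) * (px / py / (1 - f)) ≤ 0 := by
    intro a b ha hab
    have ha0 : 0 < a := lt_of_lt_of_le hLx_pos ha
    have h1 := hL2 a b ha0 hab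
    have h2 : -deriv Fy a ≤ px / py / (1 - f) := by
      rw [← hα]; exact hr_anti' Lx a hLx_pos ha
    nlinarith
  -- F1' : E a b ≤ 0 for 0 < b ≤ a ≤ Rx
  have F1' : ∀ a b : ℝ, 0 < b → b ≤ a → a ≤ Rx →
      (a - b) * (px / py) - (Fy b - Fy a) / (1 - f) ≤ 0 := by
    intro a b hb hba haR
    have h1 := hL1 b a hb hba
    have h2 : (1 - f) * (px / py) ≤ -deriv Fy a := by
      rw [← hRx]; exact hr_anti' a Rx (lt_of_lt_of_le hb hba) haR
    rw [sub_nonpos, le_div_iff₀ h1f]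
    nlinarith
  -- F3 : D a b + E b a ≤ 0 for 0 < a ≤ b
  have F3 : ∀ a b : ℝ, 0 < a → a ≤ b →
      ((Fy a - Fy b) - (b - a) * (px / py / (1 - f))) +
        ((b - a) * (px / py) - (Fy a - Fy b) / (1 - f)) ≤ 0 := by
    intro a b ha hab
    have hk : 0 ≤ Fy a - Fy b := by linarith [hmono a b ha hab]
    have hd : 0 ≤ b - a := by linarith
    have hc : 0 ≤ px / py := le_of_lt (div_pos hpx hpy)
    have key : ((Fy a - Fy b) - (b - a) * (px / py / (1 - f))) +
        ((b - a) * (px / py) - (Fy a - Fy b) / (1 - f)) =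
        -(f / (1 - f)) * ((Fy a - Fy b) + (b - a) * (px / py)) := by
      field_simp
      ring
    rw [key]
    apply mul_nonpos_of_nonpos_of_nonneg
    · simp only [neg_nonpos]
      exact div_nonneg hf0 (le_of_lt h1f)
    · nlinarith
  -- DposL : 0 ≤ D a b for 0 < a ≤ b ≤ Lx
  have DposL : ∀ a b : ℝ, 0 < a → a ≤ b → b ≤ Lx →
      0 ≤ (Fy a - Fy b) - (b - a) * (px / py / (1 - f)) := by
    intro a b ha hab hbL
    have h1 := hL1 a b ha hab
    have h2 : px / py / (1 - f) ≤ -deriv Fy b := by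
      rw [← hα]; exact hr_anti' b Lx (lt_of_lt_of_le ha hab) hbL
    nlinarith
  -- φ is nonnegative
  have PHI0 : ∀ x : ℝ, 0 < x → 0 ≤ afiPhi Fy f (px / py) Lx Rx x := by
    intro x hx
    unfold afiPhi
    split_ifs with h1 h2
    · exact DposL x Lx hx (le_of_lt h1) le_rfl
    · exact le_rfl
    · push_neg at h2
      have h3 := hL2 Rx x hRx_pos (le_of_lt h2)
      rw [hRx] at h3
      rw [sub_nonneg, div_le_iff₀ h1f]
      nlinarith
  -- φ is nonincreasing on (0, Rx]
  have PHIdec : ∀ x x' : ℝ, 0 < x → x ≤ x' → x' ≤ Rx →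
      afiPhi Fy f (px / py) Lx Rx x' ≤ afiPhi Fy f (px / py) Lx Rx x := by
    intro x x' hx hxx' hxR
    by_cases h1 : x' < Lx
    · have h2 : x < Lx := lt_of_le_of_lt hxx' h1
      unfold afiPhi
      rw [if_pos h1, if_pos h2]
      have := DposL x x' hx hxx' (le_of_lt h1)
      linarith
    · have hval : afiPhi Fy f (px / py) Lx Rx x' = 0 := by
        unfold afiPhi
        rw [if_neg h1, if_pos hxR]
      rw [hval]
      exact PHI0 x hx
  -- KL : Lipschitz bound on the increase of φ
  have KL : ∀ x x' : ℝ, 0 < x → x ≤ x' →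
      afiPhi Fy f (px / py) Lx Rx x' - afiPhi Fy f (px / py) Lx Rx x ≤
        (x' - x) * (px / py) := by
    intro x x' hx hxx'
    have hc : 0 ≤ px / py := le_of_lt (div_pos hpx hpy)
    by_cases h1 : x' ≤ Rx
    · have := PHIdec x x' hx hxx' h1
      nlinarith
    · push_neg at h1
      have hBval : afiPhi Fy f (px / py) Lx Rx x' =
          (x' - Rx) * (px / py) - (Fy Rx - Fy x') / (1 - f) := by
        unfold afiPhi
        rw [if_neg (by push_neg; linarith [hLR]), if_neg (by push_neg; exact h1)]
      by_cases h2 : x ≤ Rx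
      · have hphix := PHI0 x hx
        have hFy' : Fy x' ≤ Fy Rx := hmono Rx x' hRx_pos (le_of_lt h1)
        have hdivpos : 0 ≤ (Fy Rx - Fy x') / (1 - f) :=
          div_nonneg (by linarith) (le_of_lt h1f)
        rw [hBval]
        nlinarith
      · push_neg at h2
        have hAval : afiPhi Fy f (px / py) Lx Rx x =
            (x - Rx) * (px / py) - (Fy Rx - Fy x) / (1 - f) := by
          unfold afiPhi
          rw [if_neg (by push_neg; linarith [hLR]), if_neg (by push_neg; exact h2)]
        have hFy' : Fy x' ≤ Fy x := hmono x x' hx hxx'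
        have hdivnp : (Fy x' - Fy x) / (1 - f) ≤ 0 := by
          rw [div_nonpos_iff]
          right
          exact ⟨by linarith, by linarith⟩
        rw [hBval, hAval]
        ring_nf at hdivnp ⊢
        linarith
  -- KX : the sellX key inequality
  have KX : ∀ x x' : ℝ, 0 < x → x ≤ x' →
      (Fy x - Fy x') - (x' - x) * (px / py / (1 - f)) ≤
        afiPhi Fy f (px / py) Lx Rx x - afiPhi Fy f (px / py) Lx Rx x' := by
    intro x x' hx hxx'
    unfold afiPhi
    by_cases h1 : x' < Lx
    · have h2 : x < Lx := lt_of_le_of_lt hxx' h1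
      rw [if_pos h1, if_pos h2]
      linarith
    · push_neg at h1
      rw [if_neg (not_lt.2 h1)]
      by_cases h2 : x' ≤ Rx
      · rw [if_pos h2]
        by_cases h3 : x < Lx
        · rw [if_pos h3]
          have := F1 Lx x' le_rfl h1
          linarith
        · push_neg at h3
          rw [if_neg (not_lt.2 h3), if_pos (le_trans hxx' h2)]
          have := F1 x x' h3 hxx'
          linarith
      · push_neg at h2
        rw [if_neg (not_le.2 h2)]
        have hF3 := F3 Rx x' hRx_pos (le_of_lt h2)
        by_cases h3 : x < Lx
        · rw [if_pos h3]
          have hF1 := F1 Lx Rx le_rfl hLR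
          linarith
        · push_neg at h3
          by_cases h4 : x ≤ Rx
          · rw [if_neg (not_lt.2 h3), if_pos h4]
            have hF1 := F1 x Rx h3 h4
            linarith
          · push_neg at h4
            rw [if_neg (not_lt.2 h3), if_neg (not_le.2 h4)]
            have hF3' := F3 x x' hx hxx'
            ring_nf at hF3' ⊢
            linarith
  -- KY : the sellY key inequality (for moves to the left)
  have KY : ∀ x x' : ℝ, 0 < x' → x' ≤ x →
      (x - x') * (px / py) - (Fy x' - Fy x) / (1 - f) ≤
        afiPhi Fy f (px / py) Lx Rx x - afiPhi Fy f (px / py) Lx Rx x' := by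
    intro x x' hx' hx'x
    have hx : 0 < x := lt_of_lt_of_le hx' hx'x
    unfold afiPhi
    by_cases h1 : x < Lx
    · have h2 : x' < Lx := lt_of_le_of_lt hx'x h1
      rw [if_pos h1, if_pos h2]
      have := F3 x' x hx' hx'x
      linarith
    · push_neg at h1
      rw [if_neg (not_lt.2 h1)]
      by_cases h2 : x ≤ Rx
      · rw [if_pos h2]
        by_cases h3 : x' < Lx
        · rw [if_pos h3]
          have hE := F1' x Lx hLx_pos h1 h2
          have hF3 := F3 x' Lx hx' (le_of_lt h3)
          ring_nf at hE hF3 ⊢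
          linarith
        · push_neg at h3
          rw [if_neg (not_lt.2 h3), if_pos (le_trans hx'x h2)]
          have := F1' x x' hx' hx'x h2
          linarith
      · push_neg at h2
        rw [if_neg (not_le.2 h2)]
        by_cases h3 : x' < Lx
        · rw [if_pos h3]
          have hE1 := F1' Rx Lx hLx_pos hLR le_rfl
          have hF3 := F3 x' Lx hx' (le_of_lt h3)
          ring_nf at hE1 hF3 ⊢
          linarith
        · push_neg at h3
          by_cases h4 : x' ≤ Rx
          · rw [if_neg (not_lt.2 h3), if_pos h4]
            have := F1' Rx x' hx' h4 le_rfl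
            ring_nf at this ⊢
            linarith
          · push_neg at h4
            rw [if_neg (not_lt.2 h3), if_neg (not_le.2 h4)]
            exact le_of_eq (by ring)
  -- the image fact for sellY : executing Fx never gives reserves cheaper than the curve
  have himg : ∀ x q : ℝ, 0 < x → 0 ≤ q → 0 < Fx (Fy x + (1 - f) * q) →
      Fy (Fx (Fy x + (1 - f) * q)) ≤ Fy x + (1 - f) * q := by
    intro x q hx hq hx'
    by_cases hzmem : Fy x + (1 - f) * q ∈ Fy '' Set.Ioi 0
    · exact le_of_eq (hFx_inv.2 hzmem)
    · by_contra hcon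
      push_neg at hcon
      apply hzmem
      have hpre : IsPreconnected (Fy '' Set.Ioi 0) :=
        (isPreconnected_Ioi).image Fy
          (fun t ht => ((hFy_diff t ht).continuousAt).continuousWithinAt)
      have hoc : Set.OrdConnected (Fy '' Set.Ioi 0) := hpre.ordConnected
      have h1 : Fy x ∈ Fy '' Set.Ioi 0 := ⟨x, Set.mem_Ioi.2 hx, rfl⟩
      have h2 : Fy (Fx (Fy x + (1 - f) * q)) ∈ Fy '' Set.Ioi 0 :=
        ⟨Fx (Fy x + (1 - f) * q), Set.mem_Ioi.2 hx', rfl⟩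
      exact hoc.out h1 h2 ⟨by nlinarith, le_of_lt hcon⟩
  -- key single-step estimate
  have stepkey : ∀ (x : ℝ) (t : Tx), 0 < x → 0 ≤ t.amount → 0 < step Fy Fx f x t →
      txProfit Fy Fx f px py x t ≤
        py * (afiPhi Fy f (px / py) Lx Rx x - afiPhi Fy f (px / py) Lx Rx (step Fy Fx f x t)) := by
    intro x t hx hq hx'
    cases t with
    | sellX q =>
      simp only [Tx.amount] at hq
      simp only [step] at hx' ⊢
      simp only [txProfit]
      have hle : x ≤ x + (1 - f) * q := by nlinarith
      have hkx := KX x (x + (1 - f) * q) hx hle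
      have hmul := mul_le_mul_of_nonneg_left hkx (le_of_lt hpy)
      have e : py * ((Fy x - Fy (x + (1 - f) * q)) -
          ((x + (1 - f) * q - x)) * (px / py / (1 - f))) =
          (Fy x - Fy (x + (1 - f) * q)) * py - q * px := by
        field_simp
        ring
      linarith
    | sellY q =>
      simp only [Tx.amount] at hq
      simp only [step] at hx' ⊢
      simp only [txProfit]
      set x' := Fx (Fy x + (1 - f) * q) with hx'def
      have hyle : Fy x' ≤ Fy x + (1 - f) * q := himg x q hx hq hx'
      by_cases hcase : x' ≤ x
      · have hky := KY x x' hx' hcase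
        have hmul := mul_le_mul_of_nonneg_left hky (le_of_lt hpy)
        have e : py * ((x - x') * (px / py) - (Fy x' - Fy x) / (1 - f)) =
            (x - x') * px - (Fy x' - Fy x) * (py / (1 - f)) := by
          field_simp
        have h5 : (Fy x' - Fy x) * (py / (1 - f)) ≤ ((1 - f) * q) * (py / (1 - f)) :=
          mul_le_mul_of_nonneg_right (by linarith) (le_of_lt (div_pos hpy h1f))
        have h6 : ((1 - f) * q) * (py / (1 - f)) = q * py := by
          field_simp
        linarith
      · push_neg at hcase
        have hkl := KL x x' hx (le_of_lt hcase)
        have hmul := mul_le_mul_of_nonneg_left hkl (le_of_lt hpy)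
        have e : py * ((x' - x) * (px / py)) = (x' - x) * px := by
          field_simp
        have hqpy : 0 ≤ q * py := mul_nonneg hq (le_of_lt hpy)
        nlinarith
  -- every state in the list is positive; auxiliary membership facts
  have self_mem : ∀ (l : List Tx) (y : ℝ), y ∈ statesList Fy Fx f y l := by
    intro l y
    cases l <;> simp [statesList]
  -- main induction
  have main : ∀ (txs : List Tx) (x : ℝ), 0 < x → (∀ t ∈ txs, 0 ≤ t.amount) →
      (∀ s ∈ statesList Fy Fx f x txs, 0 < s) →
      totalProfit Fy Fx f px py x txs ≤ py * afiPhi Fy f (px / py) Lx Rx x := by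
    intro txs
    induction txs with
    | nil =>
      intro x hx _ _
      simp only [totalProfit]
      exact mul_nonneg (le_of_lt hpy) (PHI0 x hx)
    | cons t rest ih =>
      intro x hx hamt hst
      have hx' : 0 < step Fy Fx f x t := by
        apply hst
        simp only [statesList, List.mem_cons]
        right
        exact self_mem rest (step Fy Fx f x t)
      have hs' : ∀ s ∈ statesList Fy Fx f (step Fy Fx f x t) rest, 0 < s := by
        intro s hs
        apply hst
        simp only [statesList, List.mem_cons]
        right
        exact hs
      have h1 := stepkey x t hx (hamt t (List.mem_cons_self)) hx'
      have h2 := ih (step Fy Fx f x t) hx'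
        (fun t' ht' => hamt t' (List.mem_cons_of_mem t ht')) hs'
      simp only [totalProfit]
      linarith
  refine ⟨?_, ?_, ?_⟩
  -- Part (i)
  · intro hmem txs hamt hst
    have h := main txs xstar hxstar_pos hamt hst
    have hphi : afiPhi Fy f (px / py) Lx Rx xstar = 0 := by
      unfold afiPhi
      rw [if_neg (not_lt.2 hmem.1), if_pos hmem.2]
    rw [hphi] at h
    simpa using h
  -- Part (ii)
  · intro hlt
    have hstep : xstar + (1 - f) * ((Lx - xstar) / (1 - f)) = Lx := by
      field_simp
      ring
    have hphi : afiPhi Fy f (px / py) Lx Rx xstar =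
        (Fy xstar - Fy Lx) - (Lx - xstar) * (px / py / (1 - f)) := by
      unfold afiPhi
      rw [if_pos hlt]
    have hprofit : txProfit Fy Fx f px py xstar (Tx.sellX ((Lx - xstar) / (1 - f))) =
        py * afiPhi Fy f (px / py) Lx Rx xstar := by
      simp only [txProfit, hstep, hphi]
      field_simp
    constructor
    · rw [hprofit, hphi]
      have h7 := hL1s xstar Lx hxstar_pos hlt
      rw [hα] at h7
      have : 0 < (Fy xstar - Fy Lx) - (Lx - xstar) * (px / py / (1 - f)) := by linarith
      positivity
    · intro txs hamt hst
      have h := main txs xstar hxstar_pos hamt hst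
      rw [hprofit]
      exact h
  -- Part (ii')
  · intro hgt
    have hq0 : 0 ≤ (Fy Rx - Fy xstar) / (1 - f) := by
      apply div_nonneg _ (le_of_lt h1f)
      linarith [hmono Rx xstar hRx_pos (le_of_lt hgt)]
    have harg : Fy xstar + (1 - f) * ((Fy Rx - Fy xstar) / (1 - f)) = Fy Rx := by
      field_simp
      ring
    have hstep : Fx (Fy xstar + (1 - f) * ((Fy Rx - Fy xstar) / (1 - f))) = Rx := by
      rw [harg]
      exact hFx_inv.1 (Set.mem_Ioi.2 hRx_pos)
    have hphi : afiPhi Fy f (px / py) Lx Rx xstar =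
        (xstar - Rx) * (px / py) - (Fy Rx - Fy xstar) / (1 - f) := by
      unfold afiPhi
      rw [if_neg (by push_neg; linarith [hLR]), if_neg (by push_neg; exact hgt)]
    have hprofit : txProfit Fy Fx f px py xstar (Tx.sellY ((Fy Rx - Fy xstar) / (1 - f))) =
        py * afiPhi Fy f (px / py) Lx Rx xstar := by
      simp only [txProfit, hstep, hphi]
      field_simp
    constructor
    · rw [hprofit, hphi]
      have h8 := hL2s Rx xstar hRx_pos hgt
      rw [hRx] at h8
      have h9 : (Fy Rx - Fy xstar) / (1 - f) < (xstar - Rx) * (px / py) := by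
        rw [div_lt_iff₀ h1f]
        nlinarith
      have : 0 < (xstar - Rx) * (px / py) - (Fy Rx - Fy xstar) / (1 - f) := by linarith
      positivity
    · intro txs hamt hst
      have h := main txs xstar hxstar_pos hamt hst
      rw [hprofit]
      exact h
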